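/- Let (X,Y) ∈ [0,1]^d × {-1,1} be a random couple with distribution P whose regression function η and marginal Π satisfy the low noise assumption with parameters B, γ > 0. Then there exists a constant D3 > 0 depending only on B and γ such that for every bounded measurable f : [0,1]^d → ℝ, R_P(f) − R* ≥ D3 · Π(x : sign f(x) ≠ sign η(x))^{(1+γ)/γ}. -/

import Mathlib

open MeasureTheory ProbabilityTheory Set

noncomputable section

namespace ActivePlugIn

variable {d : ℕ}

/-- The unit cube `[0,1]^d`. -/
def cube (d : ℕ) : Set (Fin d → ℝ) := Set.Icc 0 1

/-- Sign function (with the convention `sgn 0 = -1`). -/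
def sgn (t : ℝ) : ℝ := if 0 < t then 1 else -1

/-- Binary classification risk `R_P(f) = P(Y ≠ sign f(X))`. -/
def risk (P : Measure ((Fin d → ℝ) × ℝ)) (f : (Fin d → ℝ) → ℝ) : ℝ :=
  (P {p | p.2 ≠ sgn (f p.1)}).toReal

/-- Bayes risk: infimum of the risk over all measurable `g : [0,1]^d → [-1,1]`. -/
def bayesRisk (P : Measure ((Fin d → ℝ) × ℝ)) : ℝ :=
  ⨅ g : {g : (Fin d → ℝ) → ℝ // Measurable g ∧ ∀ x, g x ∈ Set.Icc (-1 : ℝ) 1},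
    risk P g.1

/-- `η` is (a version of) the regression function `E(Y | X = x)` of `P`. -/
def IsRegressionOf (η : (Fin d → ℝ) → ℝ) (P : Measure ((Fin d → ℝ) × ℝ)) : Prop :=
  ∀ s : Set (Fin d → ℝ), MeasurableSet s →
    ∫ p in Prod.fst ⁻¹' s, p.2 ∂P = ∫ x in s, η x ∂(P.map Prod.fst)

/-- `P` is a distribution of a random couple `(X,Y) ∈ [0,1]^d × {-1,1}` with
regression function `η`. -/
def GoodPair (d : ℕ) (P : Measure ((Fin d → ℝ) × ℝ)) (η : (Fin d → ℝ) → ℝ) : Prop :=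
  IsProbabilityMeasure P ∧ Measurable η ∧ (∀ x, η x ∈ Set.Icc (-1 : ℝ) 1) ∧
    (∀ᵐ p ∂P, p.1 ∈ cube d ∧ (p.2 = 1 ∨ p.2 = -1)) ∧ IsRegressionOf η P

/-- Tsybakov's low noise assumption with constants `B, γ`. -/
def LowNoise (B γ : ℝ) (μ : Measure (Fin d → ℝ)) (η : (Fin d → ℝ) → ℝ) : Prop :=
  ∀ t : ℝ, 0 < t → μ {x | |η x| ≤ t} ≤ ENNReal.ofReal (B * t ^ γ)

/-- Index of the level-`m` dyadic cube containing `x`. -/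
def cubeIdx (m : ℕ) (x : Fin d → ℝ) : Fin d → ℕ := fun i => ⌊x i * 2 ^ m⌋₊

/-- The (half-open) level-`m` dyadic cube with index `k`. -/
def dyadicCube (d m : ℕ) (k : Fin d → ℕ) : Set (Fin d → ℝ) :=
  {x | ∀ i, (k i : ℝ) / 2 ^ m ≤ x i ∧ x i < ((k i : ℝ) + 1) / 2 ^ m}

/-- Support of a measure: points all of whose open neighbourhoods have positive mass. -/
def suppSet (μ : Measure (Fin d → ℝ)) : Set (Fin d → ℝ) :=
  {x | ∀ U : Set (Fin d → ℝ), IsOpen U → x ∈ U → μ U ≠ 0}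

/-- `A` belongs to the sigma-algebra generated by level-`m` dyadic cubes,
i.e. it is a union of level-`m` dyadic cubes. -/
def IsDyadicUnion (d m : ℕ) (A : Set (Fin d → ℝ)) : Prop :=
  ∃ S : Set (Fin d → ℕ), A = ⋃ k ∈ S, dyadicCube d m k

/-- `(u1,u2)`-regularity of a measure with respect to the dyadic partitions. -/
def Regular (d : ℕ) (u1 u2 : ℝ) (μ : Measure (Fin d → ℝ)) : Prop :=
  ∀ m : ℕ, 1 ≤ m → ∀ k : Fin d → ℕ, (∀ i, k i < 2 ^ m) →
    (dyadicCube d m k ∩ suppSet μ).Nonempty →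
    ENNReal.ofReal (u1 / 2 ^ (d * m)) ≤ μ (dyadicCube d m k) ∧
      μ (dyadicCube d m k) ≤ ENNReal.ofReal (u2 / 2 ^ (d * m))

/-- The `L²(μ)`-projection `η̄_m` of `η` onto piecewise-constant functions over the
level-`m` dyadic partition: on each cube it is the `μ`-average of `η` over that cube. -/
def etaBar (μ : Measure (Fin d → ℝ)) (η : (Fin d → ℝ) → ℝ) (m : ℕ) (x : Fin d → ℝ) : ℝ :=
  ⨍ y in dyadicCube d m (cubeIdx m x), η y ∂μ

/-- `A` approximates the decision boundary at level `t`. -/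
def ApproxBoundary (μ : Measure (Fin d → ℝ)) (η : (Fin d → ℝ) → ℝ) (t : ℝ)
    (A : Set (Fin d → ℝ)) : Prop :=
  {x | |η x| ≤ t} ∩ suppSet μ ⊆ A ∩ suppSet μ ∧
    A ∩ suppSet μ ⊆ {x | |η x| ≤ 3 * t} ∩ suppSet μ

/-- Assumption 2 of the paper, with constant `B2`. -/
def Assumption2 (d : ℕ) (B2 : ℝ) (μ : Measure (Fin d → ℝ)) (η : (Fin d → ℝ) → ℝ) : Prop :=
  ∀ m : ℕ, 1 ≤ m → ∀ A : Set (Fin d → ℝ), IsDyadicUnion d m A →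
    (∃ t : ℝ, 0 < t ∧ ApproxBoundary μ η t A) → (A ∩ suppSet μ).Nonempty →
    B2 * (⨆ x ∈ A ∩ suppSet μ, |η x - etaBar μ η m x|) ^ 2 ≤
      ∫ x, (η x - etaBar μ η m x) ^ 2 ∂(μ[|A ∩ suppSet μ])

/-- The law of the label `Y ∈ {-1,1}` given `X = x`: `P(Y = 1|X = x) = (1 + η(x))/2`. -/
def labelKernel (d : ℕ) (η : (Fin d → ℝ) → ℝ) (x : Fin d → ℝ) : Measure ℝ :=
  ENNReal.ofReal ((1 + η x) / 2) • Measure.dirac 1 +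
    ENNReal.ofReal ((1 - η x) / 2) • Measure.dirac (-1)

/-- The joint law of `(X,Y)` when `X ∼ μ` and `P(Y = 1|X = x) = (1 + η(x))/2`. -/
def jointMeasure (d : ℕ) (μ : Measure (Fin d → ℝ)) (η : (Fin d → ℝ) → ℝ) :
    Measure ((Fin d → ℝ) × ℝ) :=
  μ.bind fun x => (labelKernel d η x).map fun y => (x, y)

/-- The law of the trajectory `(X_1,Y_1,…,X_N,Y_N)` of an active learning procedure:
`X_k` is sampled from the kernel `samp` applied to the past observations and `Y_k` is
sampled from the conditional label distribution determined by `η`. -/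
def traj (d : ℕ) (η : (Fin d → ℝ) → ℝ)
    (samp : (k : ℕ) → (Fin k → ((Fin d → ℝ) × ℝ)) → Measure (Fin d → ℝ)) :
    (N : ℕ) → Measure (Fin N → ((Fin d → ℝ) × ℝ))
  | 0 => Measure.dirac fun i => i.elim0
  | (N + 1) =>
      (traj d η samp N).bind fun h =>
        (samp N h).bind fun x => (labelKernel d η x).map fun y => Fin.snoc h (x, y)

/-- Kullback–Leibler divergence `KL(P,Q) = ∫ log (dP/dQ) dP`. -/
def kl {Ω : Type*} [MeasurableSpace Ω] (P Q : Measure Ω) : ℝ :=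
  ∫ ω, Real.log ((P.rnDeriv Q ω).toReal) ∂P

/-- Multivariate Taylor polynomial of degree `n` of `g` at `x`, evaluated at `x1`. -/
def taylorP (d : ℕ) (g : (Fin d → ℝ) → ℝ) (n : ℕ) (x x1 : Fin d → ℝ) : ℝ :=
  ∑ k ∈ Finset.range (n + 1),
    (1 / (Nat.factorial k : ℝ)) * iteratedFDeriv ℝ k g x (fun _ => x1 - x)

/-- The Hölder class `Σ(β,K,[0,1]^d)`. -/
def HolderSigma (d : ℕ) (β K : ℝ) (g : (Fin d → ℝ) → ℝ) : Prop :=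
  ContDiff ℝ (⌊β⌋₊ : ℕ) g ∧
    ∀ x ∈ cube d, ∀ x1 ∈ cube d, |g x1 - taylorP d g ⌊β⌋₊ x x1| ≤ K * ‖x - x1‖ ^ β

/-- The Hölder condition for exponent `0 < β ≤ 1` with constant `L`
(`‖·‖` on `Fin d → ℝ` is the sup-norm). -/
def HolderLow (d : ℕ) (β L : ℝ) (η : (Fin d → ℝ) → ℝ) : Prop :=
  ∀ x1 ∈ cube d, ∀ x2 ∈ cube d, |η x1 - η x2| ≤ L * ‖x1 - x2‖ ^ β

/-- The class `F_m` of piecewise-constant functions over the level-`m` dyadic partition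
with values bounded by `1`. -/
def Fclass (d m : ℕ) : Set ((Fin d → ℝ) → ℝ) :=
  {f | ∃ lam : (Fin d → ℕ) → ℝ, (∀ k, |lam k| ≤ 1) ∧ f = fun x => lam (cubeIdx m x)}

/-- Empirical quadratic risk `P_N (Y - f(X))²`. -/
def empRisk {d : ℕ} (N : ℕ) (ω : Fin N → ((Fin d → ℝ) × ℝ)) (f : (Fin d → ℝ) → ℝ) : ℝ :=
  (∑ j, ((ω j).2 - f (ω j).1) ^ 2) / N

/-- The set `J(N)` of admissible resolution levels. -/
def Jset (d N : ℕ) : Set ℕ :=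
  {m | 1 ≤ (2 : ℝ) ^ (d * m) ∧ (2 : ℝ) ^ (d * m) ≤ (N : ℝ) / (Real.log N) ^ 2}

/-- The penalized model-selection criterion with constant `K1`
(`s_m = m (s + log log₂ N)`). -/
def crit {d : ℕ} (K1 s : ℝ) (N : ℕ) (ω : Fin N → ((Fin d → ℝ) × ℝ)) (m : ℕ) : ℝ :=
  (⨅ f ∈ Fclass d m, empRisk N ω f) +
    K1 * ((2 : ℝ) ^ (d * m) + m * (s + Real.log (Real.logb 2 N))) / N

/-- `inf_{f ∈ F_m} E (f(X) - η(X))²`. -/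
def approxErr {d : ℕ} (μ : Measure (Fin d → ℝ)) (η : (Fin d → ℝ) → ℝ) (m : ℕ) : ℝ :=
  ⨅ f ∈ Fclass d m, ∫ x, (f x - η x) ^ 2 ∂μ

/-- `m̄ = min {m ≥ 1 : inf_{f ∈ F_m} E(f(X)-η(X))² ≤ K2 2^{dm}/N}`. -/
def mbar {d : ℕ} (K2 : ℝ) (N : ℕ) (μ : Measure (Fin d → ℝ)) (η : (Fin d → ℝ) → ℝ) : ℕ :=
  sInf {m | 1 ≤ m ∧ approxErr μ η m ≤ K2 * (2 : ℝ) ^ (d * m) / N}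

/-- Membership in the class `P*_U(β,γ)` (with Hölder smoothness stated for general `β`
via Taylor polynomials), for the pair (marginal `μ`, regression function `η`). -/
def InStarClass (d : ℕ) (β γ B K u1 u2 B2 : ℝ) (μ : Measure (Fin d → ℝ))
    (η : (Fin d → ℝ) → ℝ) : Prop :=
  IsProbabilityMeasure μ ∧ μ (cube d) = 1 ∧ Measurable η ∧
    (∀ x, η x ∈ Set.Icc (-1 : ℝ) 1) ∧ LowNoise B γ μ η ∧ HolderSigma d β K η ∧
    Regular d u1 u2 μ ∧ Assumption2 d B2 μ η

/-- Membership in the class `P*_U(β,γ)` for `0 < β ≤ 1`, with Hölder constant `B1`. -/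
def InStarClassLow (d : ℕ) (β γ B B1 u1 u2 B2 : ℝ) (μ : Measure (Fin d → ℝ))
    (η : (Fin d → ℝ) → ℝ) : Prop :=
  IsProbabilityMeasure μ ∧ μ (cube d) = 1 ∧ Measurable η ∧
    (∀ x, η x ∈ Set.Icc (-1 : ℝ) 1) ∧ LowNoise B γ μ η ∧ HolderLow d β B1 η ∧
    Regular d u1 u2 μ ∧ Assumption2 d B2 μ η

lemma sgn_cases (t : ℝ) : sgn t = 1 ∨ sgn t = -1 := by
  unfold sgn; split <;> simp

lemma abs_sgn (t : ℝ) : t * sgn t = |t| := by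
  unfold sgn; split <;> rename_i h
  · rw [abs_of_pos h]; ring
  · rw [abs_of_nonpos (le_of_not_gt h)]; ring

lemma measurable_sgn_comp {f : (Fin d → ℝ) → ℝ} (hf : Measurable f) :
    Measurable fun x => sgn (f x) := by
  unfold sgn
  exact Measurable.ite (measurableSet_lt measurable_const hf) measurable_const measurable_const

lemma risk_formula (P : Measure ((Fin d → ℝ) × ℝ)) (η : (Fin d → ℝ) → ℝ)
    (hP : GoodPair d P η) {f : (Fin d → ℝ) → ℝ} (hf : Measurable f) :
    risk P f = (1 - ∫ x, η x * sgn (f x) ∂(P.map Prod.fst)) / 2 := by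
  obtain ⟨hprob, hηm, hηb, hae, hreg⟩ := hP
  have hY : ∀ᵐ p ∂P, p.2 = 1 ∨ p.2 = -1 := hae.mono fun p hp => hp.2
  haveI : IsProbabilityMeasure (P.map Prod.fst) :=
    Measure.isProbabilityMeasure_map measurable_fst.aemeasurable
  have hg : Measurable fun x => sgn (f x) := measurable_sgn_comp hf
  have hS : MeasurableSet {p : (Fin d → ℝ) × ℝ | p.2 ≠ sgn (f p.1)} := by
    have : MeasurableSet {p : (Fin d → ℝ) × ℝ | p.2 = sgn (f p.1)} :=
      measurableSet_eq_fun measurable_snd (hg.comp measurable_fst)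
    exact this.compl
  -- integrability facts
  have int_snd : Integrable (fun p : (Fin d → ℝ) × ℝ => p.2) P := by
    refine Integrable.mono' (integrable_const 1) measurable_snd.aestronglyMeasurable ?_
    refine hY.mono fun p hp => ?_
    rcases hp with hp | hp <;> simp [hp]
  have int_mul : Integrable (fun p : (Fin d → ℝ) × ℝ => p.2 * sgn (f p.1)) P := by
    refine Integrable.mono' (integrable_const 1)
      (measurable_snd.mul (hg.comp measurable_fst)).aestronglyMeasurable ?_
    refine hY.mono fun p hp => ?_
    rcases hp with hp | hp <;> rcases sgn_cases (f p.1) with h1 | h1 <;>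
      simp [hp, h1]
  have int_eta : Integrable η (P.map Prod.fst) := by
    refine Integrable.mono' (integrable_const 1) hηm.aestronglyMeasurable ?_
    exact Filter.Eventually.of_forall fun x => abs_le.2 ⟨(hηb x).1, (hηb x).2⟩
  -- risk = ∫ indicator
  have h1 : risk P f =
      ∫ p, Set.indicator {p : (Fin d → ℝ) × ℝ | p.2 ≠ sgn (f p.1)} (fun _ => (1 : ℝ)) p ∂P := by
    rw [integral_indicator_const _ hS]; simp [risk]; rfl
  -- indicator = (1 - y * sgn f x)/2 a.e.
  have h2 : ∫ p, Set.indicator {p : (Fin d → ℝ) × ℝ | p.2 ≠ sgn (f p.1)} (fun _ => (1 : ℝ)) p ∂P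
      = ∫ p, (1 - p.2 * sgn (f p.1)) / 2 ∂P := by
    refine integral_congr_ae (hY.mono fun p hp => ?_)
    rcases hp with hp | hp <;> rcases sgn_cases (f p.1) with h1 | h1 <;>
      simp [Set.indicator, Set.mem_setOf_eq, hp, h1] <;> norm_num
  have h3 : ∫ p, (1 - p.2 * sgn (f p.1)) / 2 ∂P
      = (1 - ∫ p, p.2 * sgn (f p.1) ∂P) / 2 := by
    rw [integral_div, integral_sub (integrable_const 1) int_mul, integral_const]
    simp
  -- transfer via regression function
  have h4 : ∫ p, p.2 * sgn (f p.1) ∂P = ∫ x, η x * sgn (f x) ∂(P.map Prod.fst) := by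
    set A : Set (Fin d → ℝ) := {x | 0 < f x} with hA_def
    have hA : MeasurableSet A := measurableSet_lt measurable_const hf
    have hA' : MeasurableSet (Prod.fst ⁻¹' A : Set ((Fin d → ℝ) × ℝ)) := measurable_fst hA
    have key : ∀ p : (Fin d → ℝ) × ℝ, p.2 * sgn (f p.1)
        = 2 * (Prod.fst ⁻¹' A).indicator (fun q : (Fin d → ℝ) × ℝ => q.2) p - p.2 := by
      intro p
      by_cases h0 : 0 < f p.1 <;>
        simp [sgn, Set.indicator, Set.mem_preimage, hA_def, Set.mem_setOf_eq, h0] <;> ring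
    have key2 : ∀ x, η x * sgn (f x) = 2 * A.indicator η x - η x := by
      intro x
      by_cases h0 : 0 < f x <;>
        simp [sgn, Set.indicator, hA_def, Set.mem_setOf_eq, h0] <;> ring
    have int_ind : Integrable ((Prod.fst ⁻¹' A).indicator (fun q : (Fin d → ℝ) × ℝ => q.2)) P :=
      int_snd.indicator hA'
    have int_indη : Integrable (A.indicator η) (P.map Prod.fst) := int_eta.indicator hA
    have e1 : ∫ p, p.2 * sgn (f p.1) ∂P
        = 2 * (∫ p in Prod.fst ⁻¹' A, p.2 ∂P) - ∫ p, p.2 ∂P := by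
      rw [integral_congr_ae (Filter.Eventually.of_forall key),
        integral_sub (int_ind.const_mul 2) int_snd, integral_const_mul 2 _,
        integral_indicator hA']
    have e2 : ∫ x, η x * sgn (f x) ∂(P.map Prod.fst)
        = 2 * (∫ x in A, η x ∂(P.map Prod.fst)) - ∫ x, η x ∂(P.map Prod.fst) := by
      rw [integral_congr_ae (Filter.Eventually.of_forall key2),
        integral_sub (int_indη.const_mul 2) int_eta, integral_const_mul 2 _,
        integral_indicator hA]
    have r1 : ∫ p in Prod.fst ⁻¹' A, p.2 ∂P = ∫ x in A, η x ∂(P.map Prod.fst) := hreg A hA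
    have r2 : ∫ p, p.2 ∂P = ∫ x, η x ∂(P.map Prod.fst) := by
      have := hreg Set.univ MeasurableSet.univ
      simpa using this
    rw [e1, e2, r1, r2]
  rw [h1, h2, h3, h4]

lemma risk_sub (P : Measure ((Fin d → ℝ) × ℝ)) (η : (Fin d → ℝ) → ℝ)
    (hP : GoodPair d P η) {f : (Fin d → ℝ) → ℝ} (hf : Measurable f) :
    risk P f - risk P η
      = ∫ x, Set.indicator {x | sgn (f x) ≠ sgn (η x)} (fun x => |η x|) x ∂(P.map Prod.fst) := by
  haveI : IsProbabilityMeasure P := hP.1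
  have hηm : Measurable η := hP.2.1
  have hηb := hP.2.2.1
  haveI : IsProbabilityMeasure (P.map Prod.fst) :=
    Measure.isProbabilityMeasure_map measurable_fst.aemeasurable
  have intf : Integrable (fun x => η x * sgn (f x)) (P.map Prod.fst) := by
    refine Integrable.mono' (integrable_const 1)
      (hηm.mul (measurable_sgn_comp hf)).aestronglyMeasurable ?_
    refine Filter.Eventually.of_forall fun x => ?_
    rcases sgn_cases (f x) with h1 | h1 <;>
      simp [h1, abs_le.2 ⟨(hηb x).1, (hηb x).2⟩]
  have intη : Integrable (fun x => η x * sgn (η x)) (P.map Prod.fst) := by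
    refine Integrable.mono' (integrable_const 1)
      (hηm.mul (measurable_sgn_comp hηm)).aestronglyMeasurable ?_
    refine Filter.Eventually.of_forall fun x => ?_
    rcases sgn_cases (η x) with h1 | h1 <;>
      simp [h1, abs_le.2 ⟨(hηb x).1, (hηb x).2⟩]
  have key : ∀ x, (η x * sgn (η x) - η x * sgn (f x)) / 2
      = Set.indicator {x | sgn (f x) ≠ sgn (η x)} (fun x => |η x|) x := by
    intro x
    by_cases h : sgn (f x) = sgn (η x)
    · simp [Set.indicator, Set.mem_setOf_eq, h]
    · have hneg : sgn (f x) = - sgn (η x) := by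
        rcases sgn_cases (f x) with h1 | h1 <;> rcases sgn_cases (η x) with h2 | h2 <;>
          simp_all
      rw [Set.indicator_of_mem (show x ∈ {x | sgn (f x) ≠ sgn (η x)} from h), hneg, ← abs_sgn]; ring
  rw [risk_formula P η hP hf, risk_formula P η hP hηm]
  rw [← integral_congr_ae (Filter.Eventually.of_forall key),
    integral_div, integral_sub intη intf]
  ring

/-- comparison inequality, lower bound via measure of disagreement. -/
theorem statement2 (B γ : ℝ) (hB : 0 < B) (hγ : 0 < γ) :
    ∃ D3 : ℝ, 0 < D3 ∧
      ∀ (d : ℕ) (P : Measure ((Fin d → ℝ) × ℝ)) (η : (Fin d → ℝ) → ℝ),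
        GoodPair d P η →
        LowNoise B γ (P.map Prod.fst) η →
        ∀ f : (Fin d → ℝ) → ℝ, Measurable f → (∃ M : ℝ, ∀ x, |f x| ≤ M) →
          D3 * ((P.map Prod.fst) {x | sgn (f x) ≠ sgn (η x)}).toReal ^ ((1 + γ) / γ) ≤
            risk P f - bayesRisk P := by
  refine ⟨(1 / (2 * B)) ^ (1 / γ) / 2, by positivity, ?_⟩
  intro d P η hP hLN f hf hbdd
  clear hbdd
  set μX : Measure (Fin d → ℝ) := P.map Prod.fst with hμX_def
  haveI : IsProbabilityMeasure P := hP.1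
  haveI hμXprob : IsProbabilityMeasure μX := Measure.isProbabilityMeasure_map measurable_fst.aemeasurable
  have hηm : Measurable η := hP.2.1
  have hηb := hP.2.2.1
  set D : Set (Fin d → ℝ) := {x | sgn (f x) ≠ sgn (η x)} with hD_def
  have hD : MeasurableSet D := by
    have : MeasurableSet {x | sgn (f x) = sgn (η x)} :=
      measurableSet_eq_fun (measurable_sgn_comp hf) (measurable_sgn_comp hηm)
    exact this.compl
  set δ : ℝ := (μX D).toReal with hδ_def
  have hδ0 : 0 ≤ δ := ENNReal.toReal_nonneg
  -- Bayes risk is at most risk of η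
  have hbayes : bayesRisk P ≤ risk P η := by
    have hbdd : BddBelow (Set.range fun g :
        {g : (Fin d → ℝ) → ℝ // Measurable g ∧ ∀ x, g x ∈ Set.Icc (-1 : ℝ) 1} => risk P g.1) := by
      refine ⟨0, ?_⟩
      rintro x ⟨g, rfl⟩
      exact ENNReal.toReal_nonneg
    exact ciInf_le hbdd ⟨η, hηm, hηb⟩
  have hsub := risk_sub P η hP hf
  have int_abs : Integrable (fun x => |η x|) μX := by
    refine Integrable.mono' (integrable_const 1) hηm.abs.aestronglyMeasurable ?_
    refine Filter.Eventually.of_forall fun x => ?_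
    rw [Real.norm_eq_abs, abs_abs]
    exact abs_le.2 ⟨(hηb x).1, (hηb x).2⟩
  by_cases hδpos : 0 < δ
  · -- main case
    set t : ℝ := (δ / (2 * B)) ^ (1 / γ) with ht_def
    have ht0 : 0 < t := Real.rpow_pos_of_pos (by positivity) _
    have htγ : t ^ γ = δ / (2 * B) := by
      rw [ht_def, one_div, Real.rpow_inv_rpow (by positivity) (ne_of_gt hγ)]
    have hBt : B * t ^ γ = δ / 2 := by
      rw [htγ]; field_simp
    set E : Set (Fin d → ℝ) := D ∩ {x | t < |η x|} with hE_def
    have hE : MeasurableSet E := hD.inter (measurableSet_lt measurable_const hηm.abs)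
    -- measure of E is at least δ/2
    have hsplit : μX D ≤ μX E + μX {x | |η x| ≤ t} := by
      refine le_trans (measure_mono ?_) (measure_union_le _ _)
      intro x hx
      rcases le_or_gt (|η x|) t with h | h
      · exact Or.inr h
      · exact Or.inl ⟨hx, h⟩
    have hsmall : (μX {x | |η x| ≤ t}).toReal ≤ δ / 2 := by
      have h1 := hLN t ht0
      have h2 : (μX {x | |η x| ≤ t}).toReal ≤ (ENNReal.ofReal (B * t ^ γ)).toReal :=
        ENNReal.toReal_mono ENNReal.ofReal_ne_top h1
      rwa [ENNReal.toReal_ofReal (by rw [hBt]; positivity), hBt] at h2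
    have hEmeas : δ / 2 ≤ (μX E).toReal := by
      have h1 : (μX D).toReal ≤ (μX E + μX {x | |η x| ≤ t}).toReal :=
        ENNReal.toReal_mono (by finiteness) hsplit
      rw [ENNReal.toReal_add (measure_ne_top _ _) (measure_ne_top _ _)] at h1
      have := h1.trans (add_le_add le_rfl hsmall)
      linarith [hδ_def ▸ this]
    -- lower bound the integral
    have step1 : ∫ x, Set.indicator D (fun x => |η x|) x ∂μX = ∫ x in D, |η x| ∂μX :=
      integral_indicator hD
    have step2 : ∫ x in E, |η x| ∂μX ≤ ∫ x in D, |η x| ∂μX := by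
      refine setIntegral_mono_set int_abs.integrableOn
        (Filter.Eventually.of_forall fun x => abs_nonneg _) ?_
      exact HasSubset.Subset.eventuallyLE Set.inter_subset_left
    have step3 : t * (μX E).toReal ≤ ∫ x in E, |η x| ∂μX := by
      have : ∫ x in E, t ∂μX ≤ ∫ x in E, |η x| ∂μX := by
        refine setIntegral_mono_on (integrableOn_const (measure_ne_top _ _))
          int_abs.integrableOn hE fun x hx => (le_of_lt hx.2)
      rwa [setIntegral_const, smul_eq_mul, mul_comm] at this
    have hsub2 : risk P f - risk P η = ∫ x in D, |η x| ∂μX := by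
      rw [hsub]; exact step1
    have chain : t * (δ / 2) ≤ risk P f - risk P η := by
      rw [hsub2]
      calc t * (δ / 2) ≤ t * (μX E).toReal := by
            exact mul_le_mul_of_nonneg_left hEmeas (le_of_lt ht0)
        _ ≤ ∫ x in E, |η x| ∂μX := step3
        _ ≤ ∫ x in D, |η x| ∂μX := step2
    -- identify the constant
    have hconst : (1 / (2 * B)) ^ (1 / γ) / 2 * δ ^ ((1 + γ) / γ) = t * (δ / 2) := by
      have hexp : (1 + γ) / γ = 1 / γ + 1 := by field_simp
      rw [hexp, Real.rpow_add hδpos, Real.rpow_one, ht_def,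
        div_eq_mul_one_div δ (2 * B), Real.mul_rpow hδ0 (by positivity)]
      ring
    rw [hconst]
    linarith
  · -- degenerate case δ = 0
    have hδeq : δ = 0 := le_antisymm (not_lt.1 hδpos) hδ0
    rw [hδeq, Real.zero_rpow (by positivity), mul_zero]
    have hnn : 0 ≤ risk P f - risk P η := by
      rw [hsub]
      refine integral_nonneg fun x => ?_
      exact Set.indicator_nonneg (fun x _ => abs_nonneg _) x
    linarith

end ActivePlugIn
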